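/- Let a, b ∈ ℂ with |a|² + |b|² = 1 and let U be the qubit unitary U = [[a, b], [−conj(b), conj(a)]]. Then the de-cohering power of U in the l1-coherence equals 1 − ||a|² − |b|²|: the value 1 − ||a|² − |b|²| is the greatest element of the set { 1 − C_{l1}(U ψ_θ ψ_θ† U†) : θ ∈ ℝ }, where ψ_θ ranges over the maximally coherent qubit states. -/

import Mathlib

open Matrix BigOperators ComplexOrder

/-- The l1-coherence of a matrix: the sum of the absolute values of its
off-diagonal entries. -/
noncomputable def Cl1 {n : ℕ} (A : Matrix (Fin n) (Fin n) ℂ) : ℝ :=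
  ∑ i, ∑ j, if i ≠ j then ‖A i j‖ else 0

/-- A density matrix: positive semidefinite with trace 1. -/
def IsDensity {n : ℕ} (ρ : Matrix (Fin n) (Fin n) ℂ) : Prop :=
  ρ.PosSemidef ∧ ρ.trace = 1

/-- A quantum operation (CPTP map) given by a finite family of Kraus operators. -/
def IsQuantumOp {n : ℕ} (Φ : Matrix (Fin n) (Fin n) ℂ → Matrix (Fin n) (Fin n) ℂ) : Prop :=
  ∃ (m : ℕ) (K : Fin m → Matrix (Fin n) (Fin n) ℂ),
    (∑ i, (K i)ᴴ * K i) = 1 ∧ ∀ ρ, Φ ρ = ∑ i, K i * ρ * (K i)ᴴ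

/-- The dephasing map `Δ`, keeping only the diagonal part of a matrix. -/
def Deph {n : ℕ} (A : Matrix (Fin n) (Fin n) ℂ) : Matrix (Fin n) (Fin n) ℂ :=
  Matrix.of fun i j => if i = j then A i j else 0

/-- The maximally coherent qubit state vector `(1/√2)(1, e^{iθ})`. -/
noncomputable def psi (θ : ℝ) : Fin 2 → ℂ :=
  ![1 / (Real.sqrt 2 : ℂ), Complex.exp (θ * Complex.I) / (Real.sqrt 2 : ℂ)]

/-- The outer product `w w†` of a vector with itself. -/
def outer {n : ℕ} (w : Fin n → ℂ) : Matrix (Fin n) (Fin n) ℂ :=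
  Matrix.vecMulVec w (star w)

/-- The qubit unitary `[[a, b], [-conj b, conj a]]`. -/
def Uab (a b : ℂ) : Matrix (Fin 2) (Fin 2) ℂ :=
  !![a, b; -(starRingEnd ℂ) b, (starRingEnd ℂ) a]

/-- The binary entropy (base 2), with the convention `0 · log 0 = 0`. -/
noncomputable def H (x : ℝ) : ℝ :=
  -(x * Real.logb 2 x) - (1 - x) * Real.logb 2 (1 - x)

lemma Cl1_outer_eq (a b : ℂ) (θ : ℝ) :
    Cl1 (outer ((Uab a b).mulVec (psi θ))) =
      ‖a^2 - b^2 * Complex.exp (2*θ*Complex.I)‖ := by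
  have hne : Complex.exp (↑θ * Complex.I) ≠ 0 := Complex.exp_ne_zero _
  have hconj : (starRingEnd ℂ) (Complex.exp (↑θ * Complex.I)) = (Complex.exp (↑θ * Complex.I))⁻¹ := by
    rw [← Complex.exp_conj, ← Complex.exp_neg]
    congr 1; simp
  have h2 : Complex.exp (2*↑θ*Complex.I) = Complex.exp (↑θ*Complex.I)^2 := by
    rw [show (2:ℂ)*↑θ*Complex.I = ↑θ*Complex.I + ↑θ*Complex.I by ring, Complex.exp_add, sq]
  have hs : ((Real.sqrt 2 : ℝ) : ℂ) ≠ 0 := Complex.ofReal_ne_zero.mpr (by positivity)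
  have hs2 : ((Real.sqrt 2 : ℝ) : ℂ)^2 = 2 := by
    rw [← Complex.ofReal_pow, Real.sq_sqrt] <;> norm_num
  simp only [Cl1, outer, Uab, psi, Fin.sum_univ_two, Matrix.mulVec, Matrix.vecMulVec, dotProduct]
  simp only [Matrix.cons_val', Matrix.cons_val_zero, Matrix.cons_val_one, Matrix.head_cons,
    Matrix.of_apply, Pi.star_apply, Matrix.head_fin_const, Matrix.empty_val',
    Matrix.cons_val_fin_one]
  norm_num
  rw [← norm_mul, ← norm_mul]
  have hP : (a * (↑(Real.sqrt 2):ℂ)⁻¹ + b * (Complex.exp (↑θ * Complex.I) / ↑(Real.sqrt 2))) *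
        (-((↑(Real.sqrt 2):ℂ)⁻¹ * b) + (starRingEnd ℂ) (Complex.exp (↑θ * Complex.I)) / ↑(Real.sqrt 2) * a)
      = (Complex.exp (↑θ*Complex.I))⁻¹ * (a^2 - b^2 * Complex.exp (↑θ*Complex.I)^2) / 2 := by
    rw [hconj]
    field_simp
    linear_combination (b^2 * Complex.exp (↑θ*Complex.I)^2 - a^2) * hs2
  have hQ : (-((starRingEnd ℂ) b * (↑(Real.sqrt 2):ℂ)⁻¹) + (starRingEnd ℂ) a * (Complex.exp (↑θ * Complex.I) / ↑(Real.sqrt 2))) *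
        ((↑(Real.sqrt 2):ℂ)⁻¹ * (starRingEnd ℂ) a + (starRingEnd ℂ) (Complex.exp (↑θ * Complex.I)) / ↑(Real.sqrt 2) * (starRingEnd ℂ) b)
      = (starRingEnd ℂ) ((a * (↑(Real.sqrt 2):ℂ)⁻¹ + b * (Complex.exp (↑θ * Complex.I) / ↑(Real.sqrt 2))) *
        (-((↑(Real.sqrt 2):ℂ)⁻¹ * b) + (starRingEnd ℂ) (Complex.exp (↑θ * Complex.I)) / ↑(Real.sqrt 2) * a)) := by
    simp only [_root_.map_mul, map_add, map_neg, map_div₀, map_inv₀, Complex.conj_conj,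
      Complex.conj_ofReal]
    ring
  have habs : ‖(Complex.exp (↑θ*Complex.I))⁻¹ * (a^2 - b^2*Complex.exp (↑θ*Complex.I)^2) / 2‖
      = ‖a^2 - b^2*Complex.exp (↑θ*Complex.I)^2‖ / 2 := by
    rw [norm_div, norm_mul, norm_inv, Complex.norm_exp_ofReal_mul_I]
    simp
  rw [hQ, Complex.norm_conj, hP, habs, h2]
  ring

theorem decohering_power_l1_qubit_unitary
    (a b : ℂ) (hab : ‖a‖ ^ 2 + ‖b‖ ^ 2 = 1) :
    IsGreatest
      {x : ℝ | ∃ θ : ℝ, x = 1 - Cl1 (outer ((Uab a b).mulVec (psi θ)))}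
      (1 - |‖a‖ ^ 2 - ‖b‖ ^ 2|) := by
  constructor
  · refine ⟨(Complex.arg (a^2) - Complex.arg (b^2))/2, ?_⟩
    rw [Cl1_outer_eq]
    congr 1
    have hθ : (2:ℂ) * (((Complex.arg (a^2) - Complex.arg (b^2))/2 : ℝ) : ℂ) * Complex.I
        = (Complex.arg (a^2) : ℂ) * Complex.I - (Complex.arg (b^2) : ℂ) * Complex.I := by
      push_cast; ring
    rw [hθ, Complex.exp_sub]
    have ha2 := (Complex.norm_mul_exp_arg_mul_I (a^2)).symm
    have hb2 := (Complex.norm_mul_exp_arg_mul_I (b^2)).symm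
    have hne : Complex.exp ((Complex.arg (b^2) : ℂ) * Complex.I) ≠ 0 := Complex.exp_ne_zero _
    calc |‖a‖ ^ 2 - ‖b‖ ^ 2|
        = ‖(((‖a^2‖ - ‖b^2‖ : ℝ) : ℂ))‖ := by
          rw [Complex.norm_real, Real.norm_eq_abs, norm_pow, norm_pow]
      _ = ‖(((‖a^2‖ : ℝ):ℂ) - ((‖b^2‖ : ℝ):ℂ)) *
            Complex.exp ((Complex.arg (a^2) : ℂ) * Complex.I)‖ := by
          rw [norm_mul, Complex.norm_exp_ofReal_mul_I, mul_one]; push_cast; rfl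
      _ = ‖a ^ 2 - b ^ 2 * (Complex.exp ((Complex.arg (a^2) : ℂ) * Complex.I) /
            Complex.exp ((Complex.arg (b^2) : ℂ) * Complex.I))‖ := by
          congr 1
          simp only [norm_pow, Complex.ofReal_pow] at ha2 hb2 ⊢
          field_simp
          rw [mul_comm Complex.I]
          linear_combination (-Complex.exp ((Complex.arg (b^2) : ℂ) * Complex.I)) * ha2 +
            Complex.exp ((Complex.arg (a^2) : ℂ) * Complex.I) * hb2
  · rintro x ⟨θ, rfl⟩
    rw [Cl1_outer_eq]
    have h1 : |‖a^2‖ - ‖b^2 * Complex.exp (2*θ*Complex.I)‖| ≤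
        ‖a^2 - b^2 * Complex.exp (2*θ*Complex.I)‖ :=
      abs_norm_sub_norm_le _ _
    rw [show (2:ℂ)*(θ:ℂ)*Complex.I = ((2*θ : ℝ):ℂ)*Complex.I by push_cast; ring] at h1 ⊢
    rw [norm_mul, norm_pow, norm_pow, Complex.norm_exp_ofReal_mul_I, mul_one] at h1
    linarith
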